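/- Let λ, μ ∈ 𝒫^l_n, let s ∈ Std(λ), and let u be a λ-tableau such that w_u ≤ w_s in the Bruhat order and, for every 1 ≤ i ≤ n, the node u^{-1}(i) lies weakly to the right of the node (t^μ)^{-1}(i). Then s ∈ Std^μ(λ), i.e. s is μ-row-dominated. -/

import Mathlib

namespace FS

open scoped Classical

/-- A node `(r, c, m)`: row `r`, column `c`, component `m` (all 1-based). -/
abbrev Node := ℕ × ℕ × ℕ

/-- Membership of a node in the Young diagram of the multipartition `p`,
where `p m r` is the `r`-th part of the `m`-th component. -/
def InDiag (p : ℕ → ℕ → ℕ) (A : Node) : Prop :=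
  1 ≤ A.2.1 ∧ A.2.1 ≤ p A.2.2 A.1

/-- `p` is an `l`-multipartition of `n` (components indexed `1,…,l`, rows indexed `1,…`). -/
def IsMP (l n : ℕ) (p : ℕ → ℕ → ℕ) : Prop :=
  (∀ m r, (m = 0 ∨ l < m ∨ r = 0 ∨ n < r) → p m r = 0) ∧
  (∀ m r, 1 ≤ r → p m (r + 1) ≤ p m r) ∧
  (∑ m ∈ Finset.Icc 1 l, ∑ r ∈ Finset.Icc 1 n, p m r) = n

/-- Total size of an `l`-multicomposition (rows bounded by `n`). -/
def mpSize (l n : ℕ) (p : ℕ → ℕ → ℕ) : ℕ :=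
  ∑ m ∈ Finset.Icc 1 l, ∑ r ∈ Finset.Icc 1 n, p m r

/-- Size of the `m`-th component. -/
def compSize (n : ℕ) (p : ℕ → ℕ → ℕ) (m : ℕ) : ℕ :=
  ∑ r ∈ Finset.Icc 1 n, p m r

/-- Length of column `c` of component `m`, i.e. `(p^(m))'_c`. -/
def colLen (n : ℕ) (p : ℕ → ℕ → ℕ) (m c : ℕ) : ℕ :=
  ((Finset.Icc 1 n).filter fun r => c ≤ p m r).card

/-- Dominance order on `l`-multicompositions: `Dom l N p q` means `p ⊵ q`. -/
def Dom (l N : ℕ) (p q : ℕ → ℕ → ℕ) : Prop :=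
  ∀ m r, 1 ≤ m → m ≤ l →
    (∑ m' ∈ Finset.Icc 1 (m - 1), compSize N q m') + ∑ r' ∈ Finset.Icc 1 r, q m r' ≤
      (∑ m' ∈ Finset.Icc 1 (m - 1), compSize N p m') + ∑ r' ∈ Finset.Icc 1 r, p m r'

/-- `t` is a `p`-tableau: a bijection from the diagram of `p` onto `{1,…,n}`. -/
def IsTab (n : ℕ) (p : ℕ → ℕ → ℕ) (t : Node → ℕ) : Prop :=
  (∀ A, InDiag p A → 1 ≤ t A ∧ t A ≤ n) ∧
  (∀ A B, InDiag p A → InDiag p B → t A = t B → A = B) ∧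
  (∀ i, 1 ≤ i → i ≤ n → ∃ A, InDiag p A ∧ t A = i)

/-- Entries increase from left to right along each row. -/
def RowStrict (p : ℕ → ℕ → ℕ) (t : Node → ℕ) : Prop :=
  ∀ r c m, InDiag p (r, c, m) → InDiag p (r, c + 1, m) → t (r, c, m) < t (r, c + 1, m)

/-- Entries increase down each column. -/
def ColStrict (p : ℕ → ℕ → ℕ) (t : Node → ℕ) : Prop :=
  ∀ r c m, InDiag p (r, c, m) → InDiag p (r + 1, c, m) → t (r, c, m) < t (r + 1, c, m)

/-- A standard tableau is both row-strict and column-strict. -/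
def IsStd (p : ℕ → ℕ → ℕ) (t : Node → ℕ) : Prop := RowStrict p t ∧ ColStrict p t

/-- The tableau `t_λ`, obtained by writing `1,…,n` in order down successive columns
from left to right (components from `l` down to `1`). -/
def colTab (l n : ℕ) (p : ℕ → ℕ → ℕ) : Node → ℕ := fun A =>
  (∑ m' ∈ Finset.Icc (A.2.2 + 1) l, compSize n p m') +
    (∑ c' ∈ Finset.Icc 1 (A.2.1 - 1), colLen n p A.2.2 c') + A.1

/-- The tableau `t^λ`, obtained by writing `1,…,n` in order along successive rows
from top to bottom (components from `1` up to `l`). -/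
def rowTab (n : ℕ) (p : ℕ → ℕ → ℕ) : Node → ℕ := fun A =>
  (∑ m' ∈ Finset.Icc 1 (A.2.2 - 1), compSize n p m') +
    (∑ r' ∈ Finset.Icc 1 (A.1 - 1), p A.2.2 r') + A.2.1

/-- The Coxeter generator `s_i = (i, i+1)` of the symmetric group. -/
def sw (i : ℕ) : Equiv.Perm ℕ := Equiv.swap i (i + 1)

/-- The product `s_{i_1} ⋯ s_{i_k}` corresponding to a word `L = [i_1,…,i_k]`. -/
def wordProd (L : List ℕ) : Equiv.Perm ℕ := (L.map sw).prod

/-- `L` is an expression for `w` in the Coxeter generators `s_1,…,s_{n-1}` of `S_n`. -/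
def IsWord (n : ℕ) (L : List ℕ) (w : Equiv.Perm ℕ) : Prop :=
  (∀ i ∈ L, 1 ≤ i ∧ i + 1 ≤ n) ∧ wordProd L = w

/-- The Coxeter length of `w ∈ S_n`. -/
noncomputable def len (n : ℕ) (w : Equiv.Perm ℕ) : ℕ :=
  sInf {k | ∃ L, IsWord n L w ∧ L.length = k}

/-- `L` is a reduced expression for `w ∈ S_n`. -/
def IsReduced (n : ℕ) (L : List ℕ) (w : Equiv.Perm ℕ) : Prop :=
  IsWord n L w ∧ L.length = len n w

/-- The Bruhat order on `S_n`: `x ≤ w` iff some reduced expression for `w` has an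
expression for `x` as a subsequence. -/
def BruhatLE (n : ℕ) (x w : Equiv.Perm ℕ) : Prop :=
  ∃ L, IsReduced n L w ∧ ∃ L', L'.Sublist L ∧ wordProd L' = x

/-- Strict Bruhat order. -/
def BruhatLT (n : ℕ) (x w : Equiv.Perm ℕ) : Prop := BruhatLE n x w ∧ x ≠ w

/-- The left (weak) order on `S_n`: `x ≤_L w` iff `ℓ(w) = ℓ(w x⁻¹) + ℓ(x)`. -/
def LeftLE (n : ℕ) (x w : Equiv.Perm ℕ) : Prop :=
  len n w = len n (w * x⁻¹) + len n x

/-- `w` is a permutation of `{1,…,n}` (fixing everything else). -/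
def PermOf (n : ℕ) (w : Equiv.Perm ℕ) : Prop := ∀ i, i = 0 ∨ n < i → w i = i

/-- `w` is the permutation sending the base tableau `base` to the tableau `t`
(e.g. `w = w_t` when `base = t_λ`). -/
def IsPermOfTab (n : ℕ) (p : ℕ → ℕ → ℕ) (base t : Node → ℕ) (w : Equiv.Perm ℕ) : Prop :=
  PermOf n w ∧ ∀ A, InDiag p A → w (base A) = t A

/-- `Shape(t↓j)`: the multicomposition whose `(m, r)` entry is the number of nodes in
row `r` of component `m` whose entry under `t` is at most `j`. -/
def shape (n : ℕ) (p : ℕ → ℕ → ℕ) (t : Node → ℕ) (j : ℕ) : ℕ → ℕ → ℕ :=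
  fun m r => ((Finset.Icc 1 n).filter fun c => c ≤ p m r ∧ t (r, c, m) ≤ j).card

/-- `Shape(t↓j)'`: the conjugate multicomposition, whose `(m, c)` entry is the number of
nodes in column `c` of component `l + 1 - m` whose entry under `t` is at most `j`. -/
def shapeConj (l n : ℕ) (p : ℕ → ℕ → ℕ) (t : Node → ℕ) (j : ℕ) : ℕ → ℕ → ℕ :=
  fun m c => ((Finset.Icc 1 n).filter fun r => c ≤ p (l + 1 - m) r ∧ t (r, c, l + 1 - m) ≤ j).card

/-- `A` lies weakly to the left of `B`. -/
def WeaklyLeft (A B : Node) : Prop :=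
  B.2.2 < A.2.2 ∨ (A.2.2 = B.2.2 ∧ A.2.1 ≤ B.2.1)

/-- `A` lies weakly above `B`. -/
def WeaklyAbove (A B : Node) : Prop :=
  A.2.2 < B.2.2 ∨ (A.2.2 = B.2.2 ∧ A.1 ≤ B.1)

/-- `A` lies weakly to the right of `B`. -/
def WeaklyRight (A B : Node) : Prop :=
  A.2.2 < B.2.2 ∨ (A.2.2 = B.2.2 ∧ B.2.1 ≤ A.2.1)

/-- `t` (a `mu`-tableau) is `lam`-column-dominated on `1,…,j`: each `i ≤ j` appears in `t`
at least as far to the left as it does in `t_lam`. -/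
def ColDomOn (l n : ℕ) (lam mu : ℕ → ℕ → ℕ) (t : Node → ℕ) (j : ℕ) : Prop :=
  ∀ i A B, 1 ≤ i → i ≤ j → InDiag mu A → t A = i → InDiag lam B →
    colTab l n lam B = i → WeaklyLeft A B

/-- `t` is weakly `lam`-column-dominated on `1,…,j`: each `i ≤ j` appears in `t` in a
component at least as far to the left as it does in `t_lam`. -/
def WColDomOn (l n : ℕ) (lam mu : ℕ → ℕ → ℕ) (t : Node → ℕ) (j : ℕ) : Prop :=
  ∀ i A B, 1 ≤ i → i ≤ j → InDiag mu A → t A = i → InDiag lam B →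
    colTab l n lam B = i → B.2.2 ≤ A.2.2

/-- `t` (a `mu`-tableau) is `lam`-row-dominated on `1,…,j`: each `i ≤ j` appears in `t`
at least as high as it does in `t^lam`. -/
def RowDomOn (n : ℕ) (lam mu : ℕ → ℕ → ℕ) (t : Node → ℕ) (j : ℕ) : Prop :=
  ∀ i A B, 1 ≤ i → i ≤ j → InDiag mu A → t A = i → InDiag lam B →
    rowTab n lam B = i → WeaklyAbove A B

/-- The multipartition `λ_L(c, m)`: the first `c` columns of component `m`, followed by
components `m+1,…,l`. -/
def leftPart (lam : ℕ → ℕ → ℕ) (c m : ℕ) : ℕ → ℕ → ℕ := fun k r =>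
  if k = 0 then 0 else if k = 1 then min (lam m r) c else lam (m + k - 1) r

/-- The multipartition `λ_R(c, m)`: components `1,…,m-1`, followed by the part of
component `m` after its first `c` columns. -/
def rightPart (lam : ℕ → ℕ → ℕ) (c m : ℕ) : ℕ → ℕ → ℕ := fun k r =>
  if k < m then lam k r else if k = m then lam m r - c else 0

/-- The multipartition `λ_T(r₀, m)`: components `1,…,m-1`, followed by the first `r₀`
rows of component `m`. -/
def topPart (lam : ℕ → ℕ → ℕ) (r₀ m : ℕ) : ℕ → ℕ → ℕ := fun k r =>
  if k < m then lam k r else if k = m then (if r ≤ r₀ then lam m r else 0) else 0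

/-- The multipartition `λ_B(r₀, m)`: the rows of component `m` after row `r₀`, followed
by components `m+1,…,l`. -/
def botPart (lam : ℕ → ℕ → ℕ) (r₀ m : ℕ) : ℕ → ℕ → ℕ := fun k r =>
  if k = 0 ∨ r = 0 then 0 else if k = 1 then lam m (r₀ + r) else lam (m + k - 1) r

/-- The glued tableau `t_L # t_R`: places `1,…,n_L` on the left part as in `t_L`, and
places `n_L + t_R(A)` at the node corresponding to each node `A` of the right part. -/
def glueLR (nL c m : ℕ) (tL tR : Node → ℕ) : Node → ℕ := fun A =>
  if A.2.2 < m then nL + tR A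
  else if A.2.2 = m then
    (if A.2.1 ≤ c then tL (A.1, A.2.1, 1) else nL + tR (A.1, A.2.1 - c, m))
  else tL (A.1, A.2.1, A.2.2 - m + 1)

/-- The tableau `t⁺` obtained from a tableau `t` of `μ_R(1,m)` by increasing all entries
by `k`, adjoining a first column with entries `1,…,k` to component `m`, and adjoining
empty components `m+1,…,l`. -/
def addFirstCol (k m : ℕ) (t : Node → ℕ) : Node → ℕ := fun A =>
  if A.2.2 = m then (if A.2.1 = 1 then A.1 else k + t (A.1, A.2.1 - 1, m))
  else k + t A

/-- The tableau `t⁺` obtained from a tableau `t` of `μ_L(d-1,m)` by adjoining empty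
components `1,…,m-1` and adjoining a column `d` to component `m` with entries
`nk+1,…,nk+k` from top to bottom. -/
def addLastCol (nk m d : ℕ) (t : Node → ℕ) : Node → ℕ := fun A =>
  if A.2.2 = m then (if A.2.1 = d then nk + A.1 else t (A.1, A.2.1, 1))
  else t (A.1, A.2.1, A.2.2 - m + 1)

/-- The `i`-th smallest element of a finite set of naturals (1-based). -/
def nthElt (S : Finset ℕ) (i : ℕ) : ℕ := (S.sort (· ≤ ·)).getD (i - 1) 0

/-- The set `S_B` of entries of `t_λ` lying in the bottom region (component `> m`, or
component `m` in a row `> r₀`). -/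
noncomputable def SB (l n : ℕ) (lam : ℕ → ℕ → ℕ) (r₀ m : ℕ) : Finset ℕ :=
  (Finset.Icc 1 n).filter fun i =>
    ∃ A, InDiag lam A ∧ colTab l n lam A = i ∧ (m < A.2.2 ∨ (A.2.2 = m ∧ r₀ < A.1))

/-- The glued tableau `t #̄ s`: on the bottom region the entries are `lab_B ∘ t` and on
the top region they are `lab_T ∘ s`, where `lab_B`, `lab_T` are the order-preserving
bijections onto `S_B`, `S_T`. -/
def glueBT (S_B S_T : Finset ℕ) (r₀ m : ℕ) (tB tT : Node → ℕ) : Node → ℕ := fun A =>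
  if A.2.2 < m then nthElt S_T (tT A)
  else if A.2.2 = m then
    (if A.1 ≤ r₀ then nthElt S_T (tT A) else nthElt S_B (tB (A.1 - r₀, A.2.1, 1)))
  else nthElt S_B (tB (A.1, A.2.1, A.2.2 - m + 1))

/-- The residue of a node `(r, c, m)` with respect to the multicharge `κ`:
`κ_m + c - r` in `ℤ/eℤ` (with `ZMod 0 = ℤ` encoding `e = ∞`). -/
def resNode (e : ℕ) (κ : ℕ → ZMod e) (A : Node) : ZMod e :=
  κ A.2.2 + (A.2.1 : ZMod e) - (A.1 : ZMod e)

section Proof11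

open Finset

/-! ### Basic permutation-word infrastructure -/

lemma sw_apply (i x : ℕ) : sw i x = if x = i then i + 1 else if x = i + 1 then i else x := by
  simp [sw, Equiv.swap_apply_def]

lemma sw_left (i : ℕ) : sw i i = i + 1 := by simp [sw_apply]

lemma sw_right (i : ℕ) : sw i (i+1) = i := by simp [sw_apply]

lemma sw_inv (i : ℕ) : (sw i)⁻¹ = sw i := Equiv.swap_inv i (i+1)

lemma sw_mul_self (i : ℕ) : sw i * sw i = 1 := Equiv.swap_mul_self i (i+1)

lemma wordProd_nil : wordProd [] = 1 := rfl

lemma wordProd_cons (i : ℕ) (L : List ℕ) : wordProd (i :: L) = sw i * wordProd L := by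
  simp [wordProd]

lemma permOf_one (n : ℕ) : PermOf n 1 := fun _ _ => rfl

lemma permOf_sw_mul {n i : ℕ} (hi : 1 ≤ i) (hin : i + 1 ≤ n) {y : Equiv.Perm ℕ}
    (hy : PermOf n y) : PermOf n (sw i * y) := by
  intro a ha
  rw [Equiv.Perm.mul_apply, hy a ha, sw_apply]
  split_ifs <;> omega

lemma permOf_inv {n : ℕ} {y : Equiv.Perm ℕ} (hy : PermOf n y) : PermOf n y⁻¹ := by
  intro a ha
  nth_rewrite 1 [← hy a ha]
  simp

lemma permOf_stable {n : ℕ} {y : Equiv.Perm ℕ} (hy : PermOf n y) {a : ℕ}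
    (h1 : 1 ≤ a) (h2 : a ≤ n) : 1 ≤ y a ∧ y a ≤ n := by
  constructor
  · by_contra h
    have h0 : y a = 0 := by omega
    have h0' : y a = y 0 := by rw [h0, hy 0 (Or.inl rfl)]
    have := y.injective h0'
    omega
  · by_contra h
    have h3 : y (y a) = y a := hy _ (Or.inr (by omega))
    have := y.injective h3
    omega

lemma permOf_wordProd {n : ℕ} {L : List ℕ} (h : ∀ i ∈ L, 1 ≤ i ∧ i + 1 ≤ n) :
    PermOf n (wordProd L) := by
  induction L with
  | nil => exact permOf_one n
  | cons i L ih =>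
    rw [wordProd_cons]
    have hi := h i (by simp)
    exact permOf_sw_mul hi.1 hi.2 (ih fun j hj => h j (by simp [hj]))

/-! ### Inversions -/

noncomputable def invn (n : ℕ) (w : Equiv.Perm ℕ) : ℕ :=
  (((Finset.Icc 1 n) ×ˢ (Finset.Icc 1 n)).filter fun p => p.1 < p.2 ∧ w p.2 < w p.1).card

lemma invn_one (n : ℕ) : invn n 1 = 0 := by
  rw [invn, Finset.card_eq_zero, Finset.filter_eq_empty_iff]
  rintro ⟨a, b⟩ _
  simp only [Equiv.Perm.one_apply]
  omega

lemma swap_pair_iff {i u v : ℕ} (h : ¬(u = i ∧ v = i+1)) (h2 : ¬(u = i+1 ∧ v = i)) :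
    (sw i v < sw i u ↔ v < u) := by
  rw [sw_apply, sw_apply]
  split_ifs <;> omega

lemma invn_swap_mul_asc {n i : ℕ} (hi : 1 ≤ i) (hin : i + 1 ≤ n) {y : Equiv.Perm ℕ}
    (hy : PermOf n y) (hasc : y⁻¹ i < y⁻¹ (i+1)) :
    invn n (sw i * y) = invn n y + 1 := by
  set p := y⁻¹ i with hp
  set q := y⁻¹ (i+1) with hq
  have hyp : y p = i := y.apply_symm_apply i
  have hyq : y q = i + 1 := y.apply_symm_apply (i+1)
  have hpmem : 1 ≤ p ∧ p ≤ n := permOf_stable (permOf_inv hy) hi (by omega)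
  have hqmem : 1 ≤ q ∧ q ≤ n := permOf_stable (permOf_inv hy) (by omega : 1 ≤ i+1) hin
  have key : ∀ a b : ℕ, ¬(a = p ∧ b = q) → ¬(a = q ∧ b = p) →
      ((sw i * y) b < (sw i * y) a ↔ y b < y a) := by
    intro a b h1 h2
    simp only [Equiv.Perm.mul_apply]
    apply swap_pair_iff
    · rintro ⟨ha, hb⟩
      exact h1 ⟨y.injective (ha.trans hyp.symm), y.injective (hb.trans hyq.symm)⟩
    · rintro ⟨ha, hb⟩
      exact h2 ⟨y.injective (ha.trans hyq.symm), y.injective (hb.trans hyp.symm)⟩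
  have hset : (((Finset.Icc 1 n) ×ˢ (Finset.Icc 1 n)).filter
      fun z => z.1 < z.2 ∧ (sw i * y) z.2 < (sw i * y) z.1)
      = insert (p, q) (((Finset.Icc 1 n) ×ˢ (Finset.Icc 1 n)).filter
      fun z => z.1 < z.2 ∧ y z.2 < y z.1) := by
    ext ⟨a, b⟩
    simp only [Finset.mem_filter, Finset.mem_insert, Finset.mem_product, Finset.mem_Icc,
      Prod.mk.injEq]
    constructor
    · rintro ⟨hmem, hab, hlt2⟩
      by_cases hc : a = p ∧ b = q
      · exact Or.inl hc
      · have hc2 : ¬(a = q ∧ b = p) := by rintro ⟨e1, e2⟩; omega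
        exact Or.inr ⟨hmem, hab, (key a b hc hc2).mp hlt2⟩
    · rintro (⟨e1, e2⟩ | ⟨hmem, hab, hlt2⟩)
      · subst e1; subst e2
        refine ⟨⟨⟨hpmem.1, hpmem.2⟩, ⟨hqmem.1, hqmem.2⟩⟩, hasc, ?_⟩
        simp only [Equiv.Perm.mul_apply, hyp, hyq, sw_left, sw_right]
        omega
      · have hc : ¬(a = p ∧ b = q) := by
          rintro ⟨e1, e2⟩; subst e1; subst e2; rw [hyp, hyq] at hlt2; omega
        have hc2 : ¬(a = q ∧ b = p) := by rintro ⟨e1, e2⟩; omega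
        exact ⟨hmem, hab, (key a b hc hc2).mpr hlt2⟩
  have hnot : (p, q) ∉ (((Finset.Icc 1 n) ×ˢ (Finset.Icc 1 n)).filter
      fun z => z.1 < z.2 ∧ y z.2 < y z.1) := by
    simp only [Finset.mem_filter, Finset.mem_product, Finset.mem_Icc, hyp, hyq, not_and]
    intro _ _
    omega
  rw [invn, invn, hset, Finset.card_insert_of_notMem hnot]

lemma invn_swap_mul_desc {n i : ℕ} (hi : 1 ≤ i) (hin : i + 1 ≤ n) {y : Equiv.Perm ℕ}
    (hy : PermOf n y) (hdesc : y⁻¹ (i+1) < y⁻¹ i) :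
    invn n y = invn n (sw i * y) + 1 := by
  have h1 : sw i * (sw i * y) = y := by rw [← mul_assoc, sw_mul_self, one_mul]
  have h2 : (sw i * y)⁻¹ i = y⁻¹ (i+1) := by
    rw [mul_inv_rev, Equiv.Perm.mul_apply, sw_inv, sw_left]
  have h3 : (sw i * y)⁻¹ (i+1) = y⁻¹ i := by
    rw [mul_inv_rev, Equiv.Perm.mul_apply, sw_inv, sw_right]
  have := invn_swap_mul_asc hi hin (permOf_sw_mul hi hin hy) (by rw [h2, h3]; exact hdesc)
  rw [h1] at this
  omega

lemma invn_wordProd_le (n : ℕ) : ∀ L : List ℕ, (∀ i ∈ L, 1 ≤ i ∧ i + 1 ≤ n) →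
    invn n (wordProd L) ≤ L.length := by
  intro L
  induction L with
  | nil => intro _; rw [wordProd_nil, invn_one]; simp
  | cons i L ih =>
    intro hval
    have hi := hval i (by simp)
    have hval' : ∀ j ∈ L, 1 ≤ j ∧ j + 1 ≤ n := fun j hj => hval j (by simp [hj])
    have hy : PermOf n (wordProd L) := permOf_wordProd hval'
    have hih := ih hval'
    rw [wordProd_cons]
    rcases lt_trichotomy ((wordProd L)⁻¹ i) ((wordProd L)⁻¹ (i+1)) with h | h | h
    · rw [invn_swap_mul_asc hi.1 hi.2 hy h]
      simp only [List.length_cons]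
      omega
    · have := (wordProd L)⁻¹.injective h
      omega
    · have := invn_swap_mul_desc hi.1 hi.2 hy h
      simp only [List.length_cons]
      omega

lemma exists_descent {n : ℕ} {w : Equiv.Perm ℕ} (hw : PermOf n w) (hne : w ≠ 1) :
    ∃ i, 1 ≤ i ∧ i + 1 ≤ n ∧ w⁻¹ (i+1) < w⁻¹ i := by
  by_contra hcon
  push_neg at hcon
  have hasc : ∀ i, 1 ≤ i → i + 1 ≤ n → w⁻¹ i < w⁻¹ (i+1) := by
    intro i h1 h2
    have hne2 : w⁻¹ i ≠ w⁻¹ (i+1) := fun h => by have := (w⁻¹).injective h; omega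
    have := hcon i h1 h2
    omega
  have hge : ∀ a, 1 ≤ a → a ≤ n → a ≤ w⁻¹ a := by
    intro a
    induction a with
    | zero => omega
    | succ a ih =>
      intro _ h2
      rcases Nat.eq_zero_or_pos a with h | h
      · subst h
        have := (permOf_stable (permOf_inv hw) (le_refl 1) (by omega)).1
        simpa using this
      · have h3 := ih (by omega) (by omega)
        have h4 := hasc a h (by omega)
        omega
  have hwle : ∀ b, 1 ≤ b → b ≤ n → w b ≤ b := by
    intro b h1 h2
    have hs := permOf_stable hw h1 h2
    have := hge (w b) hs.1 hs.2
    rwa [Equiv.Perm.inv_def, Equiv.symm_apply_apply] at this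
  have hfix : ∀ b, b ≤ n → 1 ≤ b → w b = b := by
    intro b
    induction b using Nat.strong_induction_on with
    | _ b ih =>
      intro hbn hb1
      have h1 := hwle b hb1 hbn
      have hs := permOf_stable hw hb1 hbn
      rcases Nat.lt_or_ge (w b) b with h | h
      · have h5 := ih (w b) h (by omega) hs.1
        have := w.injective h5
        omega
      · omega
  apply hne
  ext a
  rcases Nat.eq_zero_or_pos a with h | h
  · rw [hw a (Or.inl h)]; simp
  · rcases le_or_gt a n with h2 | h2
    · rw [hfix a h2 h]; simp
    · rw [hw a (Or.inr h2)]; simp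

lemma exists_word_invn (n : ℕ) : ∀ k (w : Equiv.Perm ℕ), PermOf n w → invn n w = k →
    ∃ L, IsWord n L w ∧ L.length = k := by
  intro k
  induction k using Nat.strong_induction_on with
  | _ k ih =>
    intro w hw hk
    by_cases hne : w = 1
    · subst hne
      refine ⟨[], ⟨by simp, wordProd_nil⟩, ?_⟩
      rw [← hk, invn_one]
      rfl
    · obtain ⟨i, hi1, hi2, hdesc⟩ := exists_descent hw hne
      set y := sw i * w with hy
      have hyP : PermOf n y := permOf_sw_mul hi1 hi2 hw
      have hyi : y⁻¹ i = w⁻¹ (i+1) := by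
        rw [hy, mul_inv_rev, Equiv.Perm.mul_apply, sw_inv, sw_left]
      have hyi2 : y⁻¹ (i+1) = w⁻¹ i := by
        rw [hy, mul_inv_rev, Equiv.Perm.mul_apply, sw_inv, sw_right]
      have hasc : y⁻¹ i < y⁻¹ (i+1) := by rw [hyi, hyi2]; exact hdesc
      have hkey : invn n (sw i * y) = invn n y + 1 := invn_swap_mul_asc hi1 hi2 hyP hasc
      have hsy : sw i * y = w := by rw [hy, ← mul_assoc, sw_mul_self, one_mul]
      rw [hsy] at hkey
      have hk1 : 1 ≤ k := by omega
      obtain ⟨L, hLw, hLlen⟩ := ih (k-1) (by omega) y hyP (by omega)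
      refine ⟨i :: L, ⟨?_, ?_⟩, ?_⟩
      · intro j hj
        rcases List.mem_cons.mp hj with h | h
        · subst h; exact ⟨hi1, hi2⟩
        · exact hLw.1 j h
      · rw [wordProd_cons, hLw.2, hsy]
      · simp only [List.length_cons, hLlen]; omega

lemma len_eq_invn {n : ℕ} {w : Equiv.Perm ℕ} (hw : PermOf n w) : len n w = invn n w := by
  obtain ⟨L, hL, hlen⟩ := exists_word_invn n (invn n w) w hw rfl
  have h1 : len n w ≤ invn n w := Nat.sInf_le ⟨L, hL, hlen⟩
  have hne : {k | ∃ L, IsWord n L w ∧ L.length = k}.Nonempty := ⟨_, L, hL, hlen⟩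
  obtain ⟨L₀, hL₀, hlen₀⟩ := Nat.sInf_mem hne
  have h2 : invn n w ≤ L₀.length := by rw [← hL₀.2]; exact invn_wordProd_le n L₀ hL₀.1
  have h3 : L₀.length = len n w := hlen₀
  omega

end Proof11

section Proof11b

open Finset

/-! ### Rank matrix and Bruhat order -/

def Rk (w : Equiv.Perm ℕ) (j N : ℕ) : ℕ := ((Finset.Icc 1 j).filter fun a => w a ≤ N).card

noncomputable def ind (P : Prop) : ℕ := if P then 1 else 0

lemma ind_le_one (P : Prop) : ind P ≤ 1 := by
  rw [ind]; split_ifs <;> omega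

lemma ind_pos {P : Prop} (h : P) : ind P = 1 := by
  rw [ind, if_pos h]

lemma ind_neg {P : Prop} (h : ¬ P) : ind P = 0 := by
  rw [ind, if_neg h]

lemma ind_mono {P Q : Prop} (h : P → Q) : ind P ≤ ind Q := by
  by_cases hP : P
  · rw [ind_pos hP, ind_pos (h hP)]
  · rw [ind_neg hP]; omega

lemma filter_eq_card {n : ℕ} {y : Equiv.Perm ℕ} (hy : PermOf n y) {M : ℕ} (hM : 1 ≤ M) (j : ℕ) :
    ((Finset.Icc 1 j).filter fun a => y a = M).card = ind (y⁻¹ M ≤ j) := by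
  have h1M : 1 ≤ y⁻¹ M := by
    rcases le_or_gt M n with h | h
    · exact (permOf_stable (permOf_inv hy) hM h).1
    · rw [permOf_inv hy M (Or.inr h)]; exact hM
  have hset : (Finset.Icc 1 j).filter (fun a => y a = M)
      = if y⁻¹ M ≤ j then {y⁻¹ M} else ∅ := by
    split_ifs with h
    · ext a
      simp only [Finset.mem_filter, Finset.mem_Icc, Finset.mem_singleton]
      constructor
      · rintro ⟨⟨ha1, ha2⟩, hya⟩
        rw [← hya, Equiv.Perm.inv_def, Equiv.symm_apply_apply]
      · intro ha
        subst ha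
        exact ⟨⟨h1M, h⟩, y.apply_symm_apply M⟩
    · ext a
      simp only [Finset.mem_filter, Finset.mem_Icc, Finset.notMem_empty, iff_false, not_and]
      rintro ⟨ha1, ha2⟩ hya
      apply h
      rw [← hya, Equiv.Perm.inv_def, Equiv.symm_apply_apply]
      exact ha2
  rw [hset, ind]
  split_ifs <;> simp

lemma Rk_split_off {n : ℕ} {y : Equiv.Perm ℕ} (hy : PermOf n y) {M : ℕ} (hM : 1 ≤ M) (j : ℕ) :
    Rk y j M = Rk y j (M-1) + ind (y⁻¹ M ≤ j) := by
  have hu : (Finset.Icc 1 j).filter (fun a => y a ≤ M)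
      = ((Finset.Icc 1 j).filter fun a => y a ≤ M - 1)
        ∪ ((Finset.Icc 1 j).filter fun a => y a = M) := by
    ext a
    simp only [Finset.mem_union, Finset.mem_filter, Finset.mem_Icc]
    omega
  have hd : Disjoint ((Finset.Icc 1 j).filter fun a => y a ≤ M - 1)
      ((Finset.Icc 1 j).filter fun a => y a = M) := by
    rw [Finset.disjoint_left]
    intro a h1 h2
    simp only [Finset.mem_filter] at h1 h2
    omega
  rw [Rk, hu, Finset.card_union_of_disjoint hd, ← Rk, filter_eq_card hy hM j]

lemma Rk_swap_left {n i : ℕ} (hi : 1 ≤ i) {y : Equiv.Perm ℕ} (hy : PermOf n y) (j N : ℕ) :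
    Rk (sw i * y) j N = if N = i
      then Rk y j (i-1) + ind (y⁻¹ (i+1) ≤ j)
      else Rk y j N := by
  split_ifs with hN
  · rw [hN]
    have hu : (Finset.Icc 1 j).filter (fun a => (sw i * y) a ≤ i)
        = ((Finset.Icc 1 j).filter fun a => y a ≤ i - 1)
          ∪ ((Finset.Icc 1 j).filter fun a => y a = i + 1) := by
      ext a
      simp only [Finset.mem_union, Finset.mem_filter, Finset.mem_Icc, Equiv.Perm.mul_apply,
        sw_apply]
      split_ifs with h1 h2 <;> omega
    have hd : Disjoint ((Finset.Icc 1 j).filter fun a => y a ≤ i - 1)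
        ((Finset.Icc 1 j).filter fun a => y a = i + 1) := by
      rw [Finset.disjoint_left]
      intro a h1 h2
      simp only [Finset.mem_filter] at h1 h2
      omega
    rw [Rk, hu, Finset.card_union_of_disjoint hd, ← Rk, filter_eq_card hy (by omega) j]
  · have hflt : ((Finset.Icc 1 j).filter fun a => (sw i * y) a ≤ N)
        = (Finset.Icc 1 j).filter fun a => y a ≤ N := by
      ext a
      simp only [Finset.mem_filter, Finset.mem_Icc, Equiv.Perm.mul_apply, sw_apply]
      split_ifs with h1 h2 <;> omega
    rw [Rk, hflt, Rk]

lemma Rk_mul_le {n i : ℕ} (hi1 : 1 ≤ i) (hin : i + 1 ≤ n) {y : Equiv.Perm ℕ}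
    (hy : PermOf n y) (hasc : y⁻¹ i < y⁻¹ (i+1)) (j N : ℕ) :
    Rk (sw i * y) j N ≤ Rk y j N := by
  rw [Rk_swap_left hi1 hy]
  split_ifs with hN
  · rw [hN]
    have hsplit := Rk_split_off hy hi1 j
    have hcmp : ind (y⁻¹ (i+1) ≤ j) ≤ ind (y⁻¹ i ≤ j) := ind_mono (by omega)
    omega
  · omega

lemma Rk_lift {n i : ℕ} (hi1 : 1 ≤ i) (hin : i + 1 ≤ n) {y w1 : Equiv.Perm ℕ}
    (hy : PermOf n y) (hw1 : PermOf n w1) (hasc : w1⁻¹ i < w1⁻¹ (i+1))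
    (hle : ∀ j N, Rk w1 j N ≤ Rk y j N) (j N : ℕ) :
    Rk (sw i * w1) j N ≤ Rk (sw i * y) j N := by
  rw [Rk_swap_left hi1 hw1, Rk_swap_left hi1 hy]
  split_ifs with hN
  · have D1 : Rk w1 j (i+1) = Rk w1 j i + ind (w1⁻¹ (i+1) ≤ j) := by
      have := Rk_split_off hw1 (by omega : 1 ≤ i+1) j
      simpa using this
    have D2 := Rk_split_off hw1 hi1 j
    have D3 : Rk y j (i+1) = Rk y j i + ind (y⁻¹ (i+1) ≤ j) := by
      have := Rk_split_off hy (by omega : 1 ≤ i+1) j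
      simpa using this
    have D4 := Rk_split_off hy hi1 j
    have h5 := hle j (i+1)
    have h6 := hle j (i-1)
    have b1 := ind_le_one (y⁻¹ i ≤ j)
    have b2 := ind_le_one (y⁻¹ (i+1) ≤ j)
    by_cases hq : w1⁻¹ (i+1) ≤ j
    · have hp : w1⁻¹ i ≤ j := by omega
      rw [ind_pos hq] at D1 ⊢
      rw [ind_pos hp] at D2
      omega
    · rw [ind_neg hq] at D1 ⊢
      have b3 := ind_le_one (w1⁻¹ i ≤ j)
      omega
  · exact hle j N

lemma bruhat_rank_aux (n : ℕ) : ∀ L : List ℕ, ∀ w : Equiv.Perm ℕ, IsReduced n L w →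
    ∀ L', L'.Sublist L → ∀ j N, Rk w j N ≤ Rk (wordProd L') j N := by
  intro L
  induction L with
  | nil =>
    intro w hred L' hsub j N
    have h0 : L' = [] := List.sublist_nil.mp hsub
    subst h0
    have h1 : w = 1 := by rw [← hred.1.2]; rfl
    subst h1
    exact le_refl _
  | cons i L1 ih =>
    intro w hred L' hsub j N
    obtain ⟨⟨hval, hprod⟩, hlen⟩ := hred
    have hi := hval i (by simp)
    have hval1 : ∀ k ∈ L1, 1 ≤ k ∧ k + 1 ≤ n := fun k hk => hval k (by simp [hk])
    have hw1P : PermOf n (wordProd L1) := permOf_wordProd hval1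
    have hwP : PermOf n w := by rw [← hprod]; exact permOf_wordProd hval
    have hw : w = sw i * wordProd L1 := by rw [← hprod, wordProd_cons]
    have hlen1 : len n (wordProd L1) ≤ L1.length := Nat.sInf_le ⟨L1, ⟨hval1, rfl⟩, rfl⟩
    have hne : {k | ∃ L, IsWord n L (wordProd L1) ∧ L.length = k}.Nonempty :=
      ⟨_, L1, ⟨hval1, rfl⟩, rfl⟩
    obtain ⟨L₀, hL₀, hlen₀⟩ := Nat.sInf_mem hne
    have hlenw : len n w ≤ len n (wordProd L1) + 1 := by
      apply Nat.sInf_le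
      refine ⟨i :: L₀, ⟨?_, ?_⟩, ?_⟩
      · intro k hk
        rcases List.mem_cons.mp hk with h | h
        · subst h; exact hi
        · exact hL₀.1 k h
      · rw [wordProd_cons, hL₀.2, hw]
      · simp only [List.length_cons, hlen₀]
        rfl
    have e1 : len n w = L1.length + 1 := by
      have := hlen
      simp only [List.length_cons] at this
      omega
    have e2 : len n (wordProd L1) = L1.length := by
      have : len n (wordProd L1) = L₀.length := hlen₀.symm
      omega
    have hred1 : IsReduced n L1 (wordProd L1) := ⟨⟨hval1, rfl⟩, e2.symm⟩
    have hasc : (wordProd L1)⁻¹ i < (wordProd L1)⁻¹ (i+1) := by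
      rcases lt_trichotomy ((wordProd L1)⁻¹ i) ((wordProd L1)⁻¹ (i+1)) with h | h | h
      · exact h
      · have := (wordProd L1)⁻¹.injective h
        omega
      · exfalso
        have hd := invn_swap_mul_desc hi.1 hi.2 hw1P h
        rw [← hw] at hd
        have q1 := len_eq_invn hwP
        have q2 := len_eq_invn hw1P
        omega
    cases hsub with
    | cons _ h =>
      calc Rk w j N ≤ Rk (wordProd L1) j N := by
            rw [hw]; exact Rk_mul_le hi.1 hi.2 hw1P hasc j N
        _ ≤ _ := ih (wordProd L1) hred1 L' h j N
    | cons_cons _ h =>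
      rename_i L2
      rw [hw, wordProd_cons]
      have hL2P : PermOf n (wordProd L2) :=
        permOf_wordProd fun k hk => hval1 k (h.subset hk)
      exact Rk_lift hi.1 hi.2 hL2P hw1P hasc (fun j' N' => ih (wordProd L1) hred1 L2 h j' N') j N

lemma bruhat_rank {n : ℕ} {x w : Equiv.Perm ℕ} (h : BruhatLE n x w) (j N : ℕ) :
    Rk w j N ≤ Rk x j N := by
  obtain ⟨L, hred, L', hsub, hx⟩ := h
  rw [← hx]
  exact bruhat_rank_aux n L w hred L' hsub j N

end Proof11b

section Proof11c

open Finset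

/-! ### Multipartition combinatorics -/

lemma Icc_eq_insert_bot {a b : ℕ} (h : a ≤ b) :
    Finset.Icc a b = insert a (Finset.Icc (a+1) b) := by
  ext x
  simp only [Finset.mem_Icc, Finset.mem_insert]
  omega

lemma Icc_eq_insert_top {a b : ℕ} (h : a ≤ b) (hb : 1 ≤ a) :
    Finset.Icc a b = insert b (Finset.Icc a (b-1)) := by
  ext x
  simp only [Finset.mem_Icc, Finset.mem_insert]
  omega

lemma sum_Icc_split_top (f : ℕ → ℕ) {r : ℕ} (h : 1 ≤ r) :
    ∑ k ∈ Finset.Icc 1 r, f k = (∑ k ∈ Finset.Icc 1 (r-1), f k) + f r := by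
  rw [Icc_eq_insert_top h (le_refl 1), Finset.sum_insert (by simp only [Finset.mem_Icc]; omega)]
  omega

lemma sum_Icc_split_bot (f : ℕ → ℕ) {a b : ℕ} (h : a ≤ b) :
    ∑ k ∈ Finset.Icc a b, f k = f a + ∑ k ∈ Finset.Icc (a+1) b, f k := by
  rw [Icc_eq_insert_bot h, Finset.sum_insert (by simp only [Finset.mem_Icc]; omega)]

lemma inDiag_mk {p : ℕ → ℕ → ℕ} {r c m : ℕ} (h1 : 1 ≤ c) (h2 : c ≤ p m r) :
    InDiag p (r, c, m) := ⟨h1, h2⟩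

lemma inDiag_c1 {p : ℕ → ℕ → ℕ} {r c m : ℕ} (h : InDiag p (r, c, m)) : 1 ≤ c := h.1

lemma inDiag_c2 {p : ℕ → ℕ → ℕ} {r c m : ℕ} (h : InDiag p (r, c, m)) : c ≤ p m r := h.2

lemma mp_pos_bounds {l n : ℕ} {p : ℕ → ℕ → ℕ} (hp : IsMP l n p) {r c m : ℕ}
    (h : InDiag p (r, c, m)) : 1 ≤ m ∧ m ≤ l ∧ 1 ≤ r ∧ r ≤ n ∧ 1 ≤ c := by
  have h1 : (1:ℕ) ≤ c := h.1
  have h2 : c ≤ p m r := h.2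
  have key : ¬ (m = 0 ∨ l < m ∨ r = 0 ∨ n < r) := by
    intro hor
    have := hp.1 m r hor
    omega
  exact ⟨by omega, by omega, by omega, by omega, h1⟩

lemma part_le_n {l n : ℕ} {p : ℕ → ℕ → ℕ} (hp : IsMP l n p) (m r : ℕ) : p m r ≤ n := by
  by_cases h : m = 0 ∨ l < m ∨ r = 0 ∨ n < r
  · rw [hp.1 m r h]; omega
  · push_neg at h
    calc p m r ≤ ∑ r' ∈ Finset.Icc 1 n, p m r' :=
          Finset.single_le_sum (fun _ _ => Nat.zero_le _)
            (by simp only [Finset.mem_Icc]; omega)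
      _ ≤ ∑ m' ∈ Finset.Icc 1 l, ∑ r' ∈ Finset.Icc 1 n, p m' r' :=
          Finset.single_le_sum (f := fun m' => ∑ r' ∈ Finset.Icc 1 n, p m' r')
            (fun _ _ => Nat.zero_le _)
            (show m ∈ Finset.Icc 1 l by rw [Finset.mem_Icc]; omega)
      _ = n := hp.2.2

lemma part_mono {l n : ℕ} {p : ℕ → ℕ → ℕ} (hp : IsMP l n p) (m : ℕ) :
    ∀ r2 {r1}, 1 ≤ r1 → r1 ≤ r2 → p m r2 ≤ p m r1 := by
  intro r2
  induction r2 with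
  | zero => intro r1 h1 h2; exact absurd h2 (by omega)
  | succ r2 ih =>
    intro r1 h1 h2
    rcases Nat.lt_or_ge r1 (r2+1) with h | h
    · have hr2 : 1 ≤ r2 := by omega
      have i1 := ih h1 (by omega)
      have i2 := hp.2.1 m r2 hr2
      omega
    · have : r1 = r2 + 1 := by omega
      rw [this]

lemma colLen_ge {l n : ℕ} {p : ℕ → ℕ → ℕ} (hp : IsMP l n p) {r c m : ℕ}
    (h : InDiag p (r, c, m)) : r ≤ colLen n p m c := by
  have hb := mp_pos_bounds hp h
  have hsub : Finset.Icc 1 r ⊆ (Finset.Icc 1 n).filter fun r' => c ≤ p m r' := by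
    intro a ha
    simp only [Finset.mem_Icc] at ha
    simp only [Finset.mem_filter, Finset.mem_Icc]
    have h4 := part_mono hp m r (r1 := a) ha.1 ha.2
    have h5 := inDiag_c2 h
    refine ⟨⟨ha.1, by omega⟩, by omega⟩
  calc r = (Finset.Icc 1 r).card := by rw [Nat.card_Icc]; omega
    _ ≤ _ := Finset.card_le_card hsub

lemma compSize_eq_sum_colLen {l n : ℕ} {p : ℕ → ℕ → ℕ} (hp : IsMP l n p) (m : ℕ) :
    compSize n p m = ∑ c ∈ Finset.Icc 1 n, colLen n p m c := by
  rw [compSize]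
  have step : ∀ r ∈ Finset.Icc 1 n, p m r = ((Finset.Icc 1 n).filter fun c => c ≤ p m r).card := by
    intro r _
    have hle := part_le_n hp m r
    have : (Finset.Icc 1 n).filter (fun c => c ≤ p m r) = Finset.Icc 1 (p m r) := by
      ext c
      simp only [Finset.mem_filter, Finset.mem_Icc]
      omega
    rw [this, Nat.card_Icc]
    omega
  rw [Finset.sum_congr rfl step]
  simp only [Finset.card_filter, colLen]
  exact Finset.sum_comm

lemma sum_compSize_eq {l n : ℕ} {p : ℕ → ℕ → ℕ} (hp : IsMP l n p) :
    ∑ m ∈ Finset.Icc 1 l, compSize n p m = n := hp.2.2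

lemma colTab_mk (l n : ℕ) (p : ℕ → ℕ → ℕ) (r c m : ℕ) :
    colTab l n p (r, c, m) = (∑ m' ∈ Finset.Icc (m+1) l, compSize n p m')
      + (∑ c' ∈ Finset.Icc 1 (c-1), colLen n p m c') + r := rfl

lemma rowTab_mk (n : ℕ) (p : ℕ → ℕ → ℕ) (r c m : ℕ) :
    rowTab n p (r, c, m) = (∑ m' ∈ Finset.Icc 1 (m-1), compSize n p m')
      + (∑ r' ∈ Finset.Icc 1 (r-1), p m r') + c := rfl

lemma inner_le_comp {l n : ℕ} {p : ℕ → ℕ → ℕ} (hp : IsMP l n p) {r c m : ℕ}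
    (h : InDiag p (r, c, m)) :
    (∑ c' ∈ Finset.Icc 1 (c-1), colLen n p m c') + r ≤ compSize n p m := by
  have hb := mp_pos_bounds hp h
  have h1 : r ≤ colLen n p m c := colLen_ge hp h
  have h2 := sum_Icc_split_top (colLen n p m) hb.2.2.2.2
  have hcn : c ≤ n := by
    have h4 := part_le_n hp m r
    have h5 := inDiag_c2 h
    omega
  have h3 : ∑ c' ∈ Finset.Icc 1 c, colLen n p m c' ≤ ∑ c' ∈ Finset.Icc 1 n, colLen n p m c' :=
    Finset.sum_le_sum_of_subset (Finset.Icc_subset_Icc (le_refl 1) hcn)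
  rw [compSize_eq_sum_colLen hp]
  omega

lemma tail_plus_comp_le {l n : ℕ} {p : ℕ → ℕ → ℕ} (hp : IsMP l n p) {m : ℕ}
    (h1 : 1 ≤ m) (h2 : m ≤ l) :
    (∑ m' ∈ Finset.Icc (m+1) l, compSize n p m') + compSize n p m ≤ n := by
  have hs := sum_Icc_split_bot (compSize n p) h2
  have h3 : ∑ m' ∈ Finset.Icc m l, compSize n p m' ≤ ∑ m' ∈ Finset.Icc 1 l, compSize n p m' :=
    Finset.sum_le_sum_of_subset (Finset.Icc_subset_Icc h1 (le_refl l))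
  have h4 := sum_compSize_eq hp
  omega

lemma colTab_le_n {l n : ℕ} {p : ℕ → ℕ → ℕ} (hp : IsMP l n p) {r c m : ℕ}
    (h : InDiag p (r, c, m)) : colTab l n p (r, c, m) ≤ n := by
  have hb := mp_pos_bounds hp h
  have h1 := inner_le_comp hp h
  have h2 := tail_plus_comp_le hp hb.1 hb.2.1
  rw [colTab_mk]
  omega

lemma colTab_comp_lt {l n : ℕ} {p : ℕ → ℕ → ℕ} (hp : IsMP l n p) {r c m r' c' m' : ℕ}
    (h : InDiag p (r, c, m)) (h' : InDiag p (r', c', m')) (hm : m' < m) :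
    colTab l n p (r, c, m) < colTab l n p (r', c', m') := by
  have hb := mp_pos_bounds hp h
  have hb' := mp_pos_bounds hp h'
  rw [colTab_mk, colTab_mk]
  have b1 := inner_le_comp hp h
  have b2 := sum_Icc_split_bot (compSize n p) hb.2.1
  have b3 : ∑ x ∈ Finset.Icc m l, compSize n p x ≤ ∑ x ∈ Finset.Icc (m'+1) l, compSize n p x :=
    Finset.sum_le_sum_of_subset (Finset.Icc_subset_Icc (by omega) (le_refl l))
  have b4 : 1 ≤ r' := hb'.2.2.1
  omega

lemma seek (f : ℕ → ℕ) : ∀ (L : ℕ) (v : ℕ), 1 ≤ v → v ≤ ∑ k ∈ Finset.Icc 1 L, f k →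
    ∃ k, 1 ≤ k ∧ k ≤ L ∧ (∑ k' ∈ Finset.Icc 1 (k-1), f k') < v ∧
      v ≤ ∑ k' ∈ Finset.Icc 1 k, f k' := by
  intro L
  induction L with
  | zero =>
    intro v h1 h2
    simp only [show Finset.Icc 1 0 = ∅ from rfl, Finset.sum_empty] at h2
    omega
  | succ L ih =>
    intro v h1 h2
    rcases le_or_gt v (∑ k ∈ Finset.Icc 1 L, f k) with h | h
    · obtain ⟨k, hk1, hk2, hk3, hk4⟩ := ih v h1 h
      exact ⟨k, hk1, by omega, hk3, hk4⟩
    · refine ⟨L+1, by omega, le_refl _, ?_, h2⟩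
      simpa using h

lemma rowTab_surj {l n : ℕ} {mu : ℕ → ℕ → ℕ} (hmu : IsMP l n mu) {v : ℕ}
    (h1 : 1 ≤ v) (h2 : v ≤ n) :
    ∃ r c m, InDiag mu (r, c, m) ∧ rowTab n mu (r, c, m) = v := by
  have htot : v ≤ ∑ m' ∈ Finset.Icc 1 l, compSize n mu m' := by
    rw [sum_compSize_eq hmu]; exact h2
  obtain ⟨m, hm1, hm2, hm3, hm4⟩ := seek (compSize n mu) l v h1 htot
  have hcomp : compSize n mu m = ∑ r' ∈ Finset.Icc 1 n, mu m r' := rfl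
  have hsplitm := sum_Icc_split_top (compSize n mu) hm1
  obtain ⟨r, hr1, hr2, hr3, hr4⟩ := seek (mu m) n (v - ∑ m' ∈ Finset.Icc 1 (m-1), compSize n mu m')
    (by omega) (by rw [← hcomp]; omega)
  refine ⟨r, (v - ∑ m' ∈ Finset.Icc 1 (m-1), compSize n mu m')
    - ∑ r' ∈ Finset.Icc 1 (r-1), mu m r', m, inDiag_mk (by omega) ?_, ?_⟩
  · have := sum_Icc_split_top (mu m) hr1
    omega
  · rw [rowTab_mk]
    omega

lemma rowTab_loc {l n : ℕ} {mu : ℕ → ℕ → ℕ} (hmu : IsMP l n mu) {r m : ℕ}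
    (hm1 : 1 ≤ m) (hm2 : m ≤ l) (hr2 : r ≤ n) {r' c' m' : ℕ} (hd : InDiag mu (r', c', m'))
    (hv : rowTab n mu (r', c', m') ≤
      (∑ m'' ∈ Finset.Icc 1 (m-1), compSize n mu m'') + ∑ r'' ∈ Finset.Icc 1 r, mu m r'') :
    m' < m ∨ (m' = m ∧ r' ≤ r) := by
  by_contra hcon
  push_neg at hcon
  rw [rowTab_mk] at hv
  have hb := mp_pos_bounds hmu hd
  rcases Nat.lt_or_ge m m' with h | h
  · have s1 : ∑ m'' ∈ Finset.Icc 1 m, compSize n mu m''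
        ≤ ∑ m'' ∈ Finset.Icc 1 (m'-1), compSize n mu m'' :=
      Finset.sum_le_sum_of_subset (Finset.Icc_subset_Icc (le_refl 1) (by omega))
    have s2 := sum_Icc_split_top (compSize n mu) hm1
    have s3 : ∑ r'' ∈ Finset.Icc 1 r, mu m r'' ≤ compSize n mu m := by
      rw [show compSize n mu m = ∑ r' ∈ Finset.Icc 1 n, mu m r' from rfl]
      exact Finset.sum_le_sum_of_subset (Finset.Icc_subset_Icc (le_refl 1) hr2)
    have hc1 : 1 ≤ c' := hb.2.2.2.2
    omega
  · have hm'm : m' = m := by omega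
    subst hm'm
    have hrr : r < r' := by
      rcases hcon with ⟨h1, h2⟩
      exact h2 rfl
    have s4 : ∑ r'' ∈ Finset.Icc 1 r, mu m' r'' ≤ ∑ r'' ∈ Finset.Icc 1 (r'-1), mu m' r'' :=
      Finset.sum_le_sum_of_subset (Finset.Icc_subset_Icc (le_refl 1) (by omega))
    have hc1 : 1 ≤ c' := hb.2.2.2.2
    omega

lemma row_chain {lam : ℕ → ℕ → ℕ} {s : Node → ℕ} (hrow : RowStrict lam s)
    {r m c1 : ℕ} (h1 : 1 ≤ c1) :
    ∀ c2, c1 ≤ c2 → InDiag lam (r, c2, m) → s (r, c1, m) ≤ s (r, c2, m) := by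
  intro c2
  induction c2 with
  | zero => intro h hd; exact absurd h (by omega)
  | succ c2 ih =>
    intro h hd
    rcases Nat.lt_or_ge c1 (c2+1) with hlt | hge
    · have hd2 : InDiag lam (r, c2, m) := by
        have h2 := inDiag_c2 hd
        exact inDiag_mk (by omega) (by omega)
      have i1 := ih (by omega) hd2
      have i2 := hrow r c2 m hd2 hd
      omega
    · have : c1 = c2 + 1 := by omega
      rw [this]

lemma col_chain {l n : ℕ} {lam : ℕ → ℕ → ℕ} {s : Node → ℕ} (hlam : IsMP l n lam)
    (hcol : ColStrict lam s) {c m r1 : ℕ} (h1 : 1 ≤ r1) :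
    ∀ r2, r1 ≤ r2 → InDiag lam (r2, c, m) → s (r1, c, m) ≤ s (r2, c, m) := by
  intro r2
  induction r2 with
  | zero => intro h hd; exact absurd h (by omega)
  | succ r2 ih =>
    intro h hd
    rcases Nat.lt_or_ge r1 (r2+1) with hlt | hge
    · have hd2 : InDiag lam (r2, c, m) := by
        refine ⟨hd.1, le_trans hd.2 (part_mono hlam m (r2+1) (by omega) (by omega))⟩
      have i1 := ih (by omega) hd2
      have i2 := hcol r2 c m hd2 hd
      omega
    · have : r1 = r2 + 1 := by omega
      rw [this]

end Proof11c

/-- If `s ∈ Std(λ)`, `u` is a `λ`-tableau with `w_u ≤ w_s` in the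
Bruhat order, and every entry of `u` lies weakly to the right of where it lies in `t^μ`,
then `s` is `μ`-row-dominated. -/
theorem rowDom_of_bruhat_and_right (l n : ℕ) (hl : 1 ≤ l) (hn : 1 ≤ n)
    (lam mu : ℕ → ℕ → ℕ) (hlam : IsMP l n lam) (hmu : IsMP l n mu)
    (s : Node → ℕ) (hsTab : IsTab n lam s) (hsStd : IsStd lam s)
    (u : Node → ℕ) (huTab : IsTab n lam u)
    (ws wu : Equiv.Perm ℕ)
    (hws : IsPermOfTab n lam (colTab l n lam) s ws)
    (hwu : IsPermOfTab n lam (colTab l n lam) u wu)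
    (hbru : BruhatLE n wu ws)
    (hright : ∀ i A B, 1 ≤ i → i ≤ n → InDiag lam A → u A = i → InDiag mu B →
      rowTab n mu B = i → WeaklyRight A B) :
    RowDomOn n mu lam s n := by
  intro i A B hi1 hin hA hsA hB hrowB
  obtain ⟨ρa, γa, ma⟩ := A
  obtain ⟨r, c, m⟩ := B
  have hBb := mp_pos_bounds hmu hB
  have hAb := mp_pos_bounds hlam hA
  set N : ℕ := (∑ m' ∈ Finset.Icc 1 (m-1), compSize n mu m')
      + ∑ r' ∈ Finset.Icc 1 r, mu m r' with hN
  have hiN : i ≤ N := by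
    rw [← hrowB, rowTab_mk, hN]
    have hsp := sum_Icc_split_top (mu m) hBb.2.2.1
    have hc : c ≤ mu m r := hB.2
    omega
  have hNn : N ≤ n := by
    rw [hN]
    have s1 : ∑ r' ∈ Finset.Icc 1 r, mu m r' ≤ compSize n mu m := by
      rw [show compSize n mu m = ∑ r' ∈ Finset.Icc 1 n, mu m r' from rfl]
      exact Finset.sum_le_sum_of_subset (Finset.Icc_subset_Icc (le_refl 1) hBb.2.2.2.1)
    have s2 := sum_Icc_split_top (compSize n mu) hBb.1
    have s3 : ∑ m' ∈ Finset.Icc 1 m, compSize n mu m' ≤ ∑ m' ∈ Finset.Icc 1 l, compSize n mu m' :=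
      Finset.sum_le_sum_of_subset (Finset.Icc_subset_Icc (le_refl 1) hBb.2.1)
    have s4 := sum_compSize_eq hmu
    omega
  have hrk : ∀ j N', Rk ws j N' ≤ Rk wu j N' := fun j N' => bruhat_rank hbru j N'
  have extract : ∀ a, 1 ≤ a → wu a ≤ N →
      ∃ ρ γ mm rv cv mv, InDiag lam (ρ, γ, mm) ∧ colTab l n lam (ρ, γ, mm) = a ∧
        InDiag mu (rv, cv, mv) ∧ rowTab n mu (rv, cv, mv) = wu a ∧
        (mm < mv ∨ (mm = mv ∧ cv ≤ γ)) ∧ (mv < m ∨ (mv = m ∧ rv ≤ r)) := by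
    intro a ha hwa
    have hv1 : 1 ≤ wu a := by
      by_contra h
      have h0 : wu a = 0 := by omega
      have h0' : wu a = wu 0 := by rw [h0, hwu.1 0 (Or.inl rfl)]
      have := wu.injective h0'
      omega
    have hvn : wu a ≤ n := le_trans hwa hNn
    obtain ⟨A', hA'd, hA'u⟩ := huTab.2.2 (wu a) hv1 hvn
    obtain ⟨ρ, γ, mm⟩ := A'
    have hca : colTab l n lam (ρ, γ, mm) = a := by
      have h1 : wu (colTab l n lam (ρ, γ, mm)) = u (ρ, γ, mm) := hwu.2 _ hA'd
      rw [hA'u] at h1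
      exact wu.injective h1
    obtain ⟨rv, cv, mv, hBd, hBval⟩ := rowTab_surj hmu hv1 hvn
    have hwr : (mm < mv ∨ (mm = mv ∧ cv ≤ γ)) :=
      hright (wu a) (ρ, γ, mm) (rv, cv, mv) hv1 hvn hA'd hA'u hBd hBval
    have hloc := rowTab_loc hmu hBb.1 hBb.2.1 hBb.2.2.2.1 hBd
      (by rw [hBval, ← hN]; exact hwa)
    exact ⟨ρ, γ, mm, rv, cv, mv, hA'd, hca, hBd, hBval, hwr, hloc⟩
  show WeaklyAbove (ρa, γa, ma) (r, c, m)
  by_contra hcon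
  rw [show WeaklyAbove (ρa, γa, ma) (r, c, m) = (ma < m ∨ (ma = m ∧ ρa ≤ r)) from rfl] at hcon
  push_neg at hcon
  rcases Nat.lt_or_ge m ma with hgt | hge
  · -- Case 1: entry of s strictly below component m
    set j := colTab l n lam (ρa, γa, ma) with hj
    have hws1 : 0 < Rk ws j N := by
      rw [Rk, Finset.card_pos]
      refine ⟨j, ?_⟩
      simp only [Finset.mem_filter, Finset.mem_Icc]
      refine ⟨⟨?_, le_refl j⟩, ?_⟩
      · rw [hj, colTab_mk]
        have := hAb.2.2.1
        omega
      · have h1 := hws.2 (ρa, γa, ma) hA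
        rw [hsA] at h1
        rw [hj, h1]
        exact hiN
    have hwu0 : Rk wu j N = 0 := by
      rw [Rk, Finset.card_eq_zero, Finset.filter_eq_empty_iff]
      intro a hmem
      simp only [Finset.mem_Icc] at hmem
      intro hwa
      obtain ⟨ρ, γ, mm, rv, cv, mv, hd1, hct, hd2, hval2, hwr2, hloc2⟩ := extract a hmem.1 hwa
      have h1 : mm ≤ mv := by rcases hwr2 with h | ⟨h, -⟩ <;> omega
      have h2 : mv ≤ m := by rcases hloc2 with h | ⟨h, -⟩ <;> omega
      have h3 := colTab_comp_lt hlam hA hd1 (show mm < ma by omega)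
      rw [hct] at h3
      have h4 := hmem.2
      omega
    have := hrk j N
    omega
  · -- Case 2: entry of s in component m but strictly below row r
    have hmam : ma = m := by omega
    subst hmam
    have hrlt : r < ρa := hcon.2 rfl
    set TT := ∑ m' ∈ Finset.Icc (ma+1) l, compSize n lam m' with hTT
    set j := TT + ∑ c' ∈ Finset.Icc 1 γa, colLen n lam ma c' with hj
    have hγa1 : 1 ≤ γa := hA.1
    have hγan : γa ≤ n := by
      have h4 := part_le_n hlam ma ρa
      have h5 : γa ≤ lam ma ρa := hA.2
      omega
    have hjle : j ≤ TT + compSize n lam ma := by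
      rw [hj]
      have h1 := compSize_eq_sum_colLen hlam ma
      have h2 : ∑ c' ∈ Finset.Icc 1 γa, colLen n lam ma c'
          ≤ ∑ c' ∈ Finset.Icc 1 n, colLen n lam ma c' :=
        Finset.sum_le_sum_of_subset (Finset.Icc_subset_Icc (le_refl 1) hγan)
      omega
    have hdiag : ∀ r1 c1, 1 ≤ r1 → r1 ≤ r + 1 → 1 ≤ c1 → c1 ≤ γa → InDiag lam (r1, c1, ma) := by
      intro r1 c1 a1 a2 a3 a4
      have e1 : lam ma ρa ≤ lam ma r1 := part_mono hlam ma ρa a1 (by omega)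
      have e2 : γa ≤ lam ma ρa := hA.2
      exact inDiag_mk a3 (by omega)
    have hct_le : ∀ r1 c1, 1 ≤ r1 → r1 ≤ r + 1 → 1 ≤ c1 → c1 ≤ γa →
        1 ≤ colTab l n lam (r1, c1, ma) ∧ colTab l n lam (r1, c1, ma) ≤ j := by
      intro r1 c1 a1 a2 a3 a4
      rw [colTab_mk]
      have hcl := colLen_ge hlam (hdiag r1 c1 a1 a2 a3 a4)
      have hsp := sum_Icc_split_top (colLen n lam ma) a3
      have hss : ∑ c' ∈ Finset.Icc 1 c1, colLen n lam ma c'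
          ≤ ∑ c' ∈ Finset.Icc 1 γa, colLen n lam ma c' :=
        Finset.sum_le_sum_of_subset (Finset.Icc_subset_Icc (le_refl 1) a4)
      exact ⟨by omega, by omega⟩
    have hlow : (r+1) * γa ≤ Rk ws j N := by
      have hmono : ∀ r1 c1 r2 c2, 1 ≤ r1 → r1 ≤ r+1 → 1 ≤ c1 → c1 ≤ γa → 1 ≤ r2 → 1 ≤ c2 →
          c1 < c2 → colTab l n lam (r1, c1, ma) < colTab l n lam (r2, c2, ma) := by
        intro r1 c1 r2 c2 a1 a2 a3 a4 a5 a6 a7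
        rw [colTab_mk, colTab_mk]
        have hcl := colLen_ge hlam (hdiag r1 c1 a1 a2 a3 a4)
        have hsp := sum_Icc_split_top (colLen n lam ma) a3
        have hss : ∑ c' ∈ Finset.Icc 1 c1, colLen n lam ma c'
            ≤ ∑ c' ∈ Finset.Icc 1 (c2-1), colLen n lam ma c' :=
          Finset.sum_le_sum_of_subset (Finset.Icc_subset_Icc (le_refl 1) (by omega))
        omega
      rw [Rk]
      have hsub : (Finset.Icc 1 (r+1) ×ˢ Finset.Icc 1 γa).image
          (fun rc : ℕ × ℕ => colTab l n lam (rc.1, rc.2, ma))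
          ⊆ (Finset.Icc 1 j).filter fun a => ws a ≤ N := by
        intro a ha
        simp only [Finset.mem_image, Finset.mem_product, Finset.mem_Icc] at ha
        obtain ⟨⟨r1, c1⟩, ⟨⟨b1, b2⟩, b3, b4⟩, hval⟩ := ha
        replace b1 : 1 ≤ r1 := b1
        replace b2 : r1 ≤ r + 1 := b2
        replace b3 : 1 ≤ c1 := b3
        replace b4 : c1 ≤ γa := b4
        have hval' : colTab l n lam (r1, c1, ma) = a := hval
        subst hval'
        simp only [Finset.mem_filter, Finset.mem_Icc]
        have hb := hct_le r1 c1 b1 b2 b3 b4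
        refine ⟨⟨hb.1, hb.2⟩, ?_⟩
        have h1 := hws.2 (r1, c1, ma) (hdiag r1 c1 b1 b2 b3 b4)
        rw [h1]
        have h2 := row_chain hsStd.1 b3 γa b4 (hdiag r1 γa b1 b2 hγa1 (le_refl γa))
        have h3 := col_chain hlam hsStd.2 b1 ρa (by omega) hA
        rw [hsA] at h3
        omega
      have hinj : Set.InjOn (fun rc : ℕ × ℕ => colTab l n lam (rc.1, rc.2, ma))
          ↑(Finset.Icc 1 (r+1) ×ˢ Finset.Icc 1 γa) := by
        rintro ⟨r1, c1⟩ h1 ⟨r2, c2⟩ h2 heq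
        simp only [Finset.coe_product, Set.mem_prod, Finset.mem_coe, Finset.mem_Icc] at h1 h2
        have heq' : colTab l n lam (r1, c1, ma) = colTab l n lam (r2, c2, ma) := heq
        rcases lt_trichotomy c1 c2 with h | h | h
        · have := hmono r1 c1 r2 c2 h1.1.1 h1.1.2 h1.2.1 h1.2.2 h2.1.1 h2.2.1 h
          omega
        · subst h
          have hr12 : r1 = r2 := by
            rw [colTab_mk, colTab_mk] at heq'
            omega
          rw [hr12]
        · have := hmono r2 c2 r1 c1 h2.1.1 h2.1.2 h2.2.1 h2.2.2 h1.1.1 h1.2.1 h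
          omega
      have hcard := Finset.card_image_of_injOn hinj
      calc (r+1) * γa = ((Finset.Icc 1 (r+1) ×ˢ Finset.Icc 1 γa).image
            (fun rc : ℕ × ℕ => colTab l n lam (rc.1, rc.2, ma))).card := by
            rw [hcard, Finset.card_product, Nat.card_Icc, Nat.card_Icc]
            congr 1 <;> omega
        _ ≤ _ := Finset.card_le_card hsub
    have hup : Rk wu j N ≤ r * γa := by
      classical
      choose! ρf γf mf rf cf mvf hd1 hct hd2 hval2 hwr2 hloc2 using extract
      have fact : ∀ a, 1 ≤ a → a ≤ j → wu a ≤ N →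
          mvf a = ma ∧ 1 ≤ rf a ∧ rf a ≤ r ∧ 1 ≤ cf a ∧ cf a ≤ γa := by
        intro a a1 a2 a3
        have d1 := hd1 a a1 a3
        have d2 := hct a a1 a3
        have d3 := hd2 a a1 a3
        have d5 := hwr2 a a1 a3
        have d6 := hloc2 a a1 a3
        have hbd := mp_pos_bounds hlam d1
        have hbv := mp_pos_bounds hmu d3
        have hmm : ma ≤ mf a := by
          by_contra hlt2
          push_neg at hlt2
          have h7 : ∑ m' ∈ Finset.Icc ma l, compSize n lam m'
              ≤ ∑ m' ∈ Finset.Icc (mf a + 1) l, compSize n lam m' :=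
            Finset.sum_le_sum_of_subset (Finset.Icc_subset_Icc (by omega) (le_refl l))
          have h8 := sum_Icc_split_bot (compSize n lam) hBb.2.1
          rw [colTab_mk] at d2
          have h9 : 1 ≤ ρf a := hbd.2.2.1
          omega
        have h10 : mf a ≤ mvf a := by rcases d5 with h | ⟨h, -⟩ <;> omega
        have h11 : mvf a ≤ ma := by rcases d6 with h | ⟨h, -⟩ <;> omega
        have hmf : mf a = ma := by omega
        have hmv : mvf a = ma := by omega
        have hrle : rf a ≤ r := by
          rcases d6 with h | ⟨-, h⟩
          · omega
          · exact h
        have hcγ : cf a ≤ γf a := by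
          rcases d5 with h | ⟨-, h⟩
          · omega
          · exact h
        have hγγ : γf a ≤ γa := by
          by_contra hgt2
          push_neg at hgt2
          rw [colTab_mk, hmf] at d2
          have hss2 : ∑ c' ∈ Finset.Icc 1 γa, colLen n lam ma c'
              ≤ ∑ c' ∈ Finset.Icc 1 (γf a - 1), colLen n lam ma c' :=
            Finset.sum_le_sum_of_subset (Finset.Icc_subset_Icc (le_refl 1) (by omega))
          have h9 : 1 ≤ ρf a := hbd.2.2.1
          omega
        exact ⟨hmv, hbv.2.2.1, hrle, hbv.2.2.2.2, hcγ.trans hγγ⟩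
      have hcard : (Finset.Icc 1 r ×ˢ Finset.Icc 1 γa).card = r * γa := by
        rw [Finset.card_product, Nat.card_Icc, Nat.card_Icc]
        congr 1 <;> omega
      rw [Rk, ← hcard]
      apply Finset.card_le_card_of_injOn (fun a => (rf a, cf a))
      · intro a ha
        simp only [Finset.mem_coe, Finset.mem_filter, Finset.mem_Icc] at ha
        have hf := fact a ha.1.1 ha.1.2 ha.2
        simp only [Finset.mem_coe, Finset.mem_product, Finset.mem_Icc]
        exact ⟨⟨hf.2.1, hf.2.2.1⟩, hf.2.2.2.1, hf.2.2.2.2⟩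
      · intro a1 h1 a2 h2 heq
        simp only [Finset.mem_coe, Finset.mem_filter, Finset.mem_Icc] at h1 h2
        have hf1 := fact a1 h1.1.1 h1.1.2 h1.2
        have hf2 := fact a2 h2.1.1 h2.1.2 h2.2
        have e1 := hval2 a1 h1.1.1 h1.2
        have e2 := hval2 a2 h2.1.1 h2.2
        have hpair : (rf a1, cf a1) = (rf a2, cf a2) := heq
        have hr12 : rf a1 = rf a2 := congrArg Prod.fst hpair
        have hc12 : cf a1 = cf a2 := congrArg Prod.snd hpair
        have hww : wu a1 = wu a2 := by
          rw [← e1, ← e2, hr12, hc12, hf1.1, hf2.1]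
        exact wu.injective hww
    have hmul : (r+1) * γa = r * γa + γa := by ring
    have := hrk j N
    omega

end FS
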